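/- (A priori energy estimate for the Neumann problem for the heat equation with bounded measurable diffusion coefficient.) Let ℓ, T, a_0 > 0, D = (0,ℓ)×(0,T), and let a : D → ℝ be measurable with 0 ≤ a(x,t) ≤ a_0 for a.e. (x,t) ∈ D. Let F be continuously differentiable on the closure of D, and let ψ be continuous on the closure of D with continuous partial derivatives ψ_t, ψ_x, ψ_xx on the closure of D, satisfying ψ(x,0) = 0 for all x ∈ [0,ℓ], ψ_x(0,t) = ψ_x(ℓ,t) = 0 for all t ∈ [0,T], and ψ_t(x,t) = a(x,t)ψ_xx(x,t) + F(x,t) for a.e. (x,t) ∈ D. Then ∫_0^T∫_0^ℓ ( ψ_t² + a ψ_xx² ) dx dt + sup_{0≤t≤T} ∫_0^ℓ ψ_x(x,t)² dx ≤ 2 ∫_0^T∫_0^ℓ F² dx dt + (2a_0 + 2) e^T ∫_0^T∫_0^ℓ F_x² dx dt. -/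

import Mathlib

open MeasureTheory

open MeasureTheory Set Filter Topology intervalIntegral

namespace HeatAux

lemma clamp_mem {c : ℝ} (hc : 0 ≤ c) (x : ℝ) : max 0 (min x c) ∈ Set.Icc (0:ℝ) c :=
  ⟨le_max_left _ _, max_le hc (min_le_right _ _)⟩

lemma clamp_eq {c : ℝ} {x : ℝ} (hx : x ∈ Set.Icc (0:ℝ) c) : max 0 (min x c) = x := by
  rw [min_eq_left hx.2, max_eq_right hx.1]

lemma clamp_cont2 {ℓ T : ℝ} (hℓ : 0 ≤ ℓ) (hT : 0 ≤ T) {f : ℝ → ℝ → ℝ}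
    (hf : ContinuousOn (fun q : ℝ × ℝ => f q.1 q.2) (Set.Icc 0 ℓ ×ˢ Set.Icc 0 T)) :
    Continuous (fun q : ℝ × ℝ => f (max 0 (min q.1 ℓ)) (max 0 (min q.2 T))) := by
  have h1 : Continuous fun q : ℝ × ℝ => ((max 0 (min q.1 ℓ), max 0 (min q.2 T)) : ℝ × ℝ) := by
    fun_prop
  exact hf.comp_continuous h1 fun q => Set.mk_mem_prod (clamp_mem hℓ _) (clamp_mem hT _)

lemma continuous_param {X : Type*} [TopologicalSpace X] [FirstCountableTopology X]
    {H : X → ℝ → ℝ} {a b C : ℝ}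
    (hH : Continuous fun p : X × ℝ => H p.1 p.2)
    (hC : ∀ p x, |H p x| ≤ C) :
    Continuous fun p => ∫ x in a..b, H p x := by
  apply intervalIntegral.continuous_of_dominated_interval (bound := fun _ => C)
  · intro p
    exact ((hH.comp (Continuous.prodMk_right p)) : Continuous fun x => H p x).aestronglyMeasurable
  · intro p
    exact Eventually.of_forall fun x _ => by simpa [Real.norm_eq_abs] using hC p x
  · exact intervalIntegrable_const
  · exact Eventually.of_forall fun x _ =>
      (hH.comp (continuous_id.prodMk continuous_const) : Continuous fun p => H p x)

lemma parts {ℓ : ℝ} (hℓ : 0 < ℓ) {u v u' v' : ℝ → ℝ}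
    (hu : ContinuousOn u (Set.Icc 0 ℓ)) (hv : ContinuousOn v (Set.Icc 0 ℓ))
    (hu'c : ContinuousOn u' (Set.Icc 0 ℓ)) (hv'c : ContinuousOn v' (Set.Icc 0 ℓ))
    (hu' : ∀ x ∈ Set.Icc (0:ℝ) ℓ, HasDerivWithinAt u (u' x) (Set.Icc 0 ℓ) x)
    (hv' : ∀ x ∈ Set.Icc (0:ℝ) ℓ, HasDerivWithinAt v (v' x) (Set.Icc 0 ℓ) x) :
    ∫ x in (0:ℝ)..ℓ, (u' x * v x + u x * v' x) = u ℓ * v ℓ - u 0 * v 0 := by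
  have huI : Set.uIcc (0:ℝ) ℓ = Set.Icc 0 ℓ := Set.uIcc_of_le hℓ.le
  apply intervalIntegral.integral_eq_sub_of_hasDeriv_right_of_le hℓ.le (hu.mul hv)
  · intro x hx
    have hm : Set.Icc (0:ℝ) ℓ ∈ 𝓝 x := Icc_mem_nhds hx.1 hx.2
    exact (((hu' x (Set.mem_Icc_of_Ioo hx)).hasDerivAt hm).mul
      ((hv' x (Set.mem_Icc_of_Ioo hx)).hasDerivAt hm)).hasDerivWithinAt
  · exact ContinuousOn.intervalIntegrable (by rw [huI]; exact (hu'c.mul hv).add (hu.mul hv'c))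

lemma abs_sub_le_uIcc {t u σ : ℝ} (h : σ ∈ Set.uIcc t u) : |σ - t| ≤ |u - t| := by
  rcases le_total t u with h' | h'
  · rw [Set.uIcc_of_le h'] at h
    rw [abs_of_nonneg (by linarith [h.1]), abs_of_nonneg (by linarith)]
    linarith [h.2]
  · rw [Set.uIcc_of_ge h'] at h
    rw [abs_of_nonpos (by linarith [h.2]), abs_of_nonpos (by linarith)]
    linarith [h.1]

lemma diag_deriv {T : ℝ} {N K : ℝ → ℝ → ℝ}
    (hKc : Continuous fun p : ℝ × ℝ => K p.1 p.2)
    (hderiv : ∀ u : ℝ, ∀ s ∈ Set.Ioo (0:ℝ) T, HasDerivAt (fun s' => N s' u) (K s u) s)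
    (hsymm : ∀ s ∈ Set.Icc (0:ℝ) T, ∀ u ∈ Set.Icc (0:ℝ) T, N s u = N u s)
    {t : ℝ} (ht : t ∈ Set.Ioo (0:ℝ) T) :
    HasDerivAt (fun s => N s s) (2 * K t t) t := by
  rw [hasDerivAt_iff_isLittleO, Asymptotics.isLittleO_iff]
  intro c hc
  obtain ⟨δ, hδ, hKδ⟩ := Metric.continuousAt_iff.1 hKc.continuousAt (c/2) (half_pos hc)
  have hδ' : 0 < min δ (min t (T - t)) :=
    lt_min hδ (lt_min ht.1 (by linarith [ht.2]))
  filter_upwards [Metric.ball_mem_nhds t hδ'] with u hu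
  rw [Metric.mem_ball, Real.dist_eq] at hu
  have hud : |u - t| < δ := lt_of_lt_of_le hu (min_le_left _ _)
  have hut : |u - t| < t := lt_of_lt_of_le hu ((min_le_right _ _).trans (min_le_left _ _))
  have huT : |u - t| < T - t := lt_of_lt_of_le hu ((min_le_right _ _).trans (min_le_right _ _))
  have hu0 : u ∈ Set.Ioo (0:ℝ) T := by
    rw [abs_lt] at hut huT; constructor <;> linarith
  have hseg : Set.uIcc t u ⊆ Set.Ioo (0:ℝ) T := by
    intro σ hσ
    rcases Set.mem_uIcc.1 hσ with h | h <;> constructor <;>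
      first
        | exact lt_of_lt_of_le ht.1 h.1
        | exact lt_of_le_of_lt h.2 hu0.2
        | exact lt_of_lt_of_le hu0.1 h.1
        | exact lt_of_le_of_lt h.2 ht.2
  have hKcont : ∀ v : ℝ, Continuous fun σ => K σ v := fun v =>
    hKc.comp (continuous_id.prodMk continuous_const)
  have hNint : ∀ v : ℝ, ∫ σ in t..u, K σ v = N u v - N t v := by
    intro v
    exact intervalIntegral.integral_eq_sub_of_hasDerivAt
      (fun σ hσ => hderiv v σ (hseg hσ)) ((hKcont v).intervalIntegrable t u)
  have hsy : N t u = N u t := by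
    have htI : t ∈ Set.Icc (0:ℝ) T := ⟨ht.1.le, ht.2.le⟩
    have huI : u ∈ Set.Icc (0:ℝ) T := ⟨hu0.1.le, hu0.2.le⟩
    exact hsymm t htI u huI
  have key : N u u - N t t = (∫ σ in t..u, K σ u) + (∫ σ in t..u, K σ t) := by
    have h1 := hNint u
    have h2 := hNint t
    have : N t u - N t t = N u t - N t t := by rw [hsy]
    linarith
  have hconst : ∀ v : ℝ, ∫ σ in t..u, K t t = (u - t) * K t t := by
    intro v; rw [intervalIntegral.integral_const]; ring_nf
  have hbound : ∀ v : ℝ, |v - t| ≤ |u - t| →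
      ‖(∫ σ in t..u, K σ v) - (u - t) * K t t‖ ≤ c/2 * |u - t| := by
    intro v hv
    have hsub : (∫ σ in t..u, K σ v) - (u - t) * K t t
        = ∫ σ in t..u, (K σ v - K t t) := by
      rw [intervalIntegral.integral_sub ((hKcont v).intervalIntegrable t u)
        (intervalIntegrable_const), intervalIntegral.integral_const, smul_eq_mul]
    rw [hsub]
    apply intervalIntegral.norm_integral_le_of_norm_le_const
    intro σ hσ
    have hσm : σ ∈ Set.uIcc t u := Set.Ioc_subset_Icc_self hσ
    have hσt : |σ - t| ≤ |u - t| := abs_sub_le_uIcc hσm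
    have hd : dist (σ, v) (t, t) < δ := by
      rw [Prod.dist_eq]
      exact max_lt (lt_of_le_of_lt hσt hud) (lt_of_le_of_lt hv hud)
    have := hKδ hd
    rw [Real.dist_eq] at this
    exact le_of_lt this
  have hfin : ‖N u u - N t t - (u - t) • (2 * K t t)‖
      ≤ c/2 * |u - t| + c/2 * |u - t| := by
    rw [key, smul_eq_mul]
    have : (∫ σ in t..u, K σ u) + (∫ σ in t..u, K σ t) - (u - t) * (2 * K t t)
        = ((∫ σ in t..u, K σ u) - (u - t) * K t t)
          + ((∫ σ in t..u, K σ t) - (u - t) * K t t) := by ring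
    rw [this]
    exact (norm_add_le _ _).trans
      (add_le_add (hbound u le_rfl) (hbound t (by simp [abs_nonneg])))
  calc ‖N u u - N t t - (u - t) • (2 * K t t)‖
      ≤ c/2 * |u - t| + c/2 * |u - t| := hfin
    _ = c * ‖u - t‖ := by rw [Real.norm_eq_abs]; ring

lemma ae_ne (c : ℝ) : ∀ᵐ t : ℝ ∂volume, t ≠ c := by
  rw [MeasureTheory.ae_iff]
  have : {t : ℝ | ¬t ≠ c} = {c} := by ext y; simp
  rw [this]
  exact measure_singleton c

lemma ae_Ioc_of_ae_restrict_Ioo {c : ℝ} {P : ℝ → Prop}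
    (h : ∀ᵐ t ∂(volume.restrict (Set.Ioo (0:ℝ) c)), P t) :
    ∀ᵐ t : ℝ ∂volume, t ∈ Set.Ioc (0:ℝ) c → P t := by
  filter_upwards [ae_imp_of_ae_restrict h, ae_ne c] with t h1 h2 ht
  exact h1 ⟨ht.1, lt_of_le_of_ne ht.2 h2⟩

lemma ae_restrict_Icc_of_ae_Ioc {c d : ℝ} (hdc : d ≤ c) {P : ℝ → Prop}
    (h : ∀ᵐ t : ℝ ∂volume, t ∈ Set.Ioc (0:ℝ) c → P t) :
    ∀ᵐ t ∂(volume.restrict (Set.Icc (0:ℝ) d)), P t := by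
  filter_upwards [ae_restrict_of_ae h, ae_restrict_of_ae (ae_ne 0),
    ae_restrict_mem measurableSet_Icc] with t h1 h2 h3
  exact h1 ⟨lt_of_le_of_ne h3.1 (Ne.symm h2), le_trans h3.2 hdc⟩

end HeatAux


set_option maxHeartbeats 2000000 in
/-- A priori energy estimate for the Neumann problem for the heat equation
`ψ_t = a ψ_xx + F` with bounded measurable diffusion coefficient `a`, homogeneous Neumann
boundary conditions and zero initial data. The supremum over `t ∈ [0,T]` of
`∫_0^ℓ ψ_x(·,t)²` is expressed by quantifying over `t0 ∈ [0,T]`. -/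
theorem heat_equation_energy_estimate
    (ℓ T a0 : ℝ) (hℓ : 0 < ℓ) (hT : 0 < T) (ha0 : 0 < a0)
    (a : ℝ × ℝ → ℝ) (ha : Measurable a)
    (hab : ∀ᵐ q ∂(volume.restrict (Set.Ioo (0 : ℝ) ℓ ×ˢ Set.Ioo (0 : ℝ) T)),
      0 ≤ a q ∧ a q ≤ a0)
    (F Fx Ft : ℝ → ℝ → ℝ)
    (hF : ContinuousOn (fun q : ℝ × ℝ => F q.1 q.2) (Set.Icc 0 ℓ ×ˢ Set.Icc 0 T))
    (hFx : ∀ x ∈ Set.Icc (0 : ℝ) ℓ, ∀ t ∈ Set.Icc (0 : ℝ) T,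
      HasDerivWithinAt (fun y => F y t) (Fx x t) (Set.Icc 0 ℓ) x)
    (hFxc : ContinuousOn (fun q : ℝ × ℝ => Fx q.1 q.2) (Set.Icc 0 ℓ ×ˢ Set.Icc 0 T))
    (hFt : ∀ x ∈ Set.Icc (0 : ℝ) ℓ, ∀ t ∈ Set.Icc (0 : ℝ) T,
      HasDerivWithinAt (fun s => F x s) (Ft x t) (Set.Icc 0 T) t)
    (hFtc : ContinuousOn (fun q : ℝ × ℝ => Ft q.1 q.2) (Set.Icc 0 ℓ ×ˢ Set.Icc 0 T))
    (ψ ψt ψx ψxx : ℝ → ℝ → ℝ)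
    (hψ : ContinuousOn (fun q : ℝ × ℝ => ψ q.1 q.2) (Set.Icc 0 ℓ ×ˢ Set.Icc 0 T))
    (hψt : ∀ x ∈ Set.Icc (0 : ℝ) ℓ, ∀ t ∈ Set.Icc (0 : ℝ) T,
      HasDerivWithinAt (fun s => ψ x s) (ψt x t) (Set.Icc 0 T) t)
    (hψtc : ContinuousOn (fun q : ℝ × ℝ => ψt q.1 q.2) (Set.Icc 0 ℓ ×ˢ Set.Icc 0 T))
    (hψx : ∀ x ∈ Set.Icc (0 : ℝ) ℓ, ∀ t ∈ Set.Icc (0 : ℝ) T,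
      HasDerivWithinAt (fun y => ψ y t) (ψx x t) (Set.Icc 0 ℓ) x)
    (hψxc : ContinuousOn (fun q : ℝ × ℝ => ψx q.1 q.2) (Set.Icc 0 ℓ ×ˢ Set.Icc 0 T))
    (hψxx : ∀ x ∈ Set.Icc (0 : ℝ) ℓ, ∀ t ∈ Set.Icc (0 : ℝ) T,
      HasDerivWithinAt (fun y => ψx y t) (ψxx x t) (Set.Icc 0 ℓ) x)
    (hψxxc : ContinuousOn (fun q : ℝ × ℝ => ψxx q.1 q.2) (Set.Icc 0 ℓ ×ˢ Set.Icc 0 T))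
    (hinit : ∀ x ∈ Set.Icc (0 : ℝ) ℓ, ψ x 0 = 0)
    (hbdry : ∀ t ∈ Set.Icc (0 : ℝ) T, ψx 0 t = 0 ∧ ψx ℓ t = 0)
    (hpde : ∀ᵐ q ∂(volume.restrict (Set.Ioo (0 : ℝ) ℓ ×ˢ Set.Ioo (0 : ℝ) T)),
      ψt q.1 q.2 = a q * ψxx q.1 q.2 + F q.1 q.2) :
    ∀ t0 ∈ Set.Icc (0 : ℝ) T,
      (∫ t in (0 : ℝ)..T, ∫ x in (0 : ℝ)..ℓ,
          ((ψt x t) ^ 2 + a (x, t) * (ψxx x t) ^ 2))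
        + (∫ x in (0 : ℝ)..ℓ, (ψx x t0) ^ 2)
      ≤ 2 * (∫ t in (0 : ℝ)..T, ∫ x in (0 : ℝ)..ℓ, (F x t) ^ 2)
        + (2 * a0 + 2) * Real.exp T *
            (∫ t in (0 : ℝ)..T, ∫ x in (0 : ℝ)..ℓ, (Fx x t) ^ 2) := by
  intro t0 ht0
  -- clamping maps
  set mx : ℝ → ℝ := fun x => max 0 (min x ℓ) with hmxdef
  set mt : ℝ → ℝ := fun t => max 0 (min t T) with hmtdef
  have hmxm : ∀ x : ℝ, mx x ∈ Set.Icc (0:ℝ) ℓ := fun x => HeatAux.clamp_mem hℓ.le x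
  have hmtm : ∀ t : ℝ, mt t ∈ Set.Icc (0:ℝ) T := fun t => HeatAux.clamp_mem hT.le t
  have hmxe : ∀ x ∈ Set.Icc (0:ℝ) ℓ, mx x = x := fun x hx => HeatAux.clamp_eq hx
  have hmte : ∀ t ∈ Set.Icc (0:ℝ) T, mt t = t := fun t ht => HeatAux.clamp_eq ht
  -- clamped functions
  set Ps : ℝ → ℝ → ℝ := fun x t => ψ (mx x) (mt t) with hPsdef
  set Pst : ℝ → ℝ → ℝ := fun x t => ψt (mx x) (mt t) with hPstdef
  set Psx : ℝ → ℝ → ℝ := fun x t => ψx (mx x) (mt t) with hPsxdef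
  set Psxx : ℝ → ℝ → ℝ := fun x t => ψxx (mx x) (mt t) with hPsxxdef
  set Fcl : ℝ → ℝ → ℝ := fun x t => F (mx x) (mt t) with hFcldef
  set Fxcl : ℝ → ℝ → ℝ := fun x t => Fx (mx x) (mt t) with hFxcldef
  have cPs : Continuous fun q : ℝ × ℝ => Ps q.1 q.2 := HeatAux.clamp_cont2 hℓ.le hT.le hψ
  have cPst : Continuous fun q : ℝ × ℝ => Pst q.1 q.2 := HeatAux.clamp_cont2 hℓ.le hT.le hψtc
  have cPsx : Continuous fun q : ℝ × ℝ => Psx q.1 q.2 := HeatAux.clamp_cont2 hℓ.le hT.le hψxc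
  have cPsxx : Continuous fun q : ℝ × ℝ => Psxx q.1 q.2 := HeatAux.clamp_cont2 hℓ.le hT.le hψxxc
  have cFcl : Continuous fun q : ℝ × ℝ => Fcl q.1 q.2 := HeatAux.clamp_cont2 hℓ.le hT.le hF
  have cFxcl : Continuous fun q : ℝ × ℝ => Fxcl q.1 q.2 := HeatAux.clamp_cont2 hℓ.le hT.le hFxc
  -- bounds
  have hQne : ((0:ℝ), (0:ℝ)) ∈ Set.Icc (0:ℝ) ℓ ×ˢ Set.Icc (0:ℝ) T :=
    ⟨⟨le_refl _, hℓ.le⟩, ⟨le_refl _, hT.le⟩⟩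
  have hQcomp : IsCompact (Set.Icc (0:ℝ) ℓ ×ˢ Set.Icc (0:ℝ) T) := isCompact_Icc.prod isCompact_Icc
  obtain ⟨C1, hC1⟩ := hQcomp.exists_bound_of_continuousOn hψtc
  obtain ⟨C2, hC2⟩ := hQcomp.exists_bound_of_continuousOn hψxxc
  obtain ⟨C3, hC3⟩ := hQcomp.exists_bound_of_continuousOn hψ
  obtain ⟨C4, hC4⟩ := hQcomp.exists_bound_of_continuousOn hψxc
  obtain ⟨C5, hC5⟩ := hQcomp.exists_bound_of_continuousOn hFxc
  obtain ⟨C6, hC6⟩ := hQcomp.exists_bound_of_continuousOn hF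
  have C1nn : 0 ≤ C1 := le_trans (norm_nonneg _) (hC1 _ hQne)
  have C2nn : 0 ≤ C2 := le_trans (norm_nonneg _) (hC2 _ hQne)
  have C3nn : 0 ≤ C3 := le_trans (norm_nonneg _) (hC3 _ hQne)
  have C4nn : 0 ≤ C4 := le_trans (norm_nonneg _) (hC4 _ hQne)
  have C5nn : 0 ≤ C5 := le_trans (norm_nonneg _) (hC5 _ hQne)
  have C6nn : 0 ≤ C6 := le_trans (norm_nonneg _) (hC6 _ hQne)
  have bPst : ∀ x t : ℝ, |Pst x t| ≤ C1 := fun x t => by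
    simpa [Real.norm_eq_abs] using hC1 (mx x, mt t) ⟨hmxm x, hmtm t⟩
  have bPsxx : ∀ x t : ℝ, |Psxx x t| ≤ C2 := fun x t => by
    simpa [Real.norm_eq_abs] using hC2 (mx x, mt t) ⟨hmxm x, hmtm t⟩
  have bPs : ∀ x t : ℝ, |Ps x t| ≤ C3 := fun x t => by
    simpa [Real.norm_eq_abs] using hC3 (mx x, mt t) ⟨hmxm x, hmtm t⟩
  have bPsx : ∀ x t : ℝ, |Psx x t| ≤ C4 := fun x t => by
    simpa [Real.norm_eq_abs] using hC4 (mx x, mt t) ⟨hmxm x, hmtm t⟩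
  have bFxcl : ∀ x t : ℝ, |Fxcl x t| ≤ C5 := fun x t => by
    simpa [Real.norm_eq_abs] using hC5 (mx x, mt t) ⟨hmxm x, hmtm t⟩
  have bFcl : ∀ x t : ℝ, |Fcl x t| ≤ C6 := fun x t => by
    simpa [Real.norm_eq_abs] using hC6 (mx x, mt t) ⟨hmxm x, hmtm t⟩
  -- parametric integrals
  set Kk : ℝ → ℝ → ℝ := fun s t => ∫ x in (0:ℝ)..ℓ, Pst x s * Psxx x t with hKdef
  set Nn : ℝ → ℝ → ℝ := fun s t => ∫ x in (0:ℝ)..ℓ, Ps x s * Psxx x t with hNdef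
  set Mm : ℝ → ℝ → ℝ := fun s t => ∫ x in (0:ℝ)..ℓ, Psx x s * Psx x t with hMdef
  set Jj : ℝ → ℝ := fun t => ∫ x in (0:ℝ)..ℓ, Fxcl x t * Psx x t with hJdef
  set Pp : ℝ → ℝ := fun t => ∫ x in (0:ℝ)..ℓ, (Pst x t)^2 with hPpdef
  set PF : ℝ → ℝ := fun t => ∫ x in (0:ℝ)..ℓ, (Fcl x t)^2 with hPFdef
  set GF : ℝ → ℝ := fun t => ∫ x in (0:ℝ)..ℓ, (Fxcl x t)^2 with hGFdef
  set gg : ℝ → ℝ := fun t => Mm t t with hggdef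
  set Bc : ℝ → ℝ := fun t => Kk t t + Jj t with hBcdef
  -- joint continuity of parametric integrals
  have cKk : Continuous fun p : ℝ × ℝ => Kk p.1 p.2 := by
    simp only [hKdef]
    exact HeatAux.continuous_param (C := C1 * C2)
      ((cPst.comp (continuous_snd.prodMk continuous_fst.fst)).mul
        (cPsxx.comp (continuous_snd.prodMk continuous_fst.snd)))
      (fun p x => by
        rw [abs_mul]
        exact mul_le_mul (bPst _ _) (bPsxx _ _) (abs_nonneg _) C1nn)
  have cNn : Continuous fun p : ℝ × ℝ => Nn p.1 p.2 := by
    simp only [hNdef]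
    exact HeatAux.continuous_param (C := C3 * C2)
      ((cPs.comp (continuous_snd.prodMk continuous_fst.fst)).mul
        (cPsxx.comp (continuous_snd.prodMk continuous_fst.snd)))
      (fun p x => by
        rw [abs_mul]
        exact mul_le_mul (bPs _ _) (bPsxx _ _) (abs_nonneg _) C3nn)
  have cMm : Continuous fun p : ℝ × ℝ => Mm p.1 p.2 := by
    simp only [hMdef]
    exact HeatAux.continuous_param (C := C4 * C4)
      ((cPsx.comp (continuous_snd.prodMk continuous_fst.fst)).mul
        (cPsx.comp (continuous_snd.prodMk continuous_fst.snd)))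
      (fun p x => by
        rw [abs_mul]
        exact mul_le_mul (bPsx _ _) (bPsx _ _) (abs_nonneg _) C4nn)
  have cgg : Continuous gg := by
    simp only [hggdef]
    exact cMm.comp (continuous_id.prodMk continuous_id)
  have cJj : Continuous Jj := by
    simp only [hJdef]
    exact HeatAux.continuous_param (C := C5 * C4)
      ((cFxcl.comp (continuous_snd.prodMk continuous_fst)).mul
        (cPsx.comp (continuous_snd.prodMk continuous_fst)))
      (fun p x => by
        rw [abs_mul]
        exact mul_le_mul (bFxcl _ _) (bPsx _ _) (abs_nonneg _) C5nn)
  have cPp : Continuous Pp := by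
    simp only [hPpdef]
    exact HeatAux.continuous_param (C := C1 ^ 2)
      ((cPst.comp (continuous_snd.prodMk continuous_fst)).pow 2)
      (fun p x => by
        rw [abs_pow]
        exact pow_le_pow_left₀ (abs_nonneg _) (bPst _ _) 2)
  have cPF : Continuous PF := by
    simp only [hPFdef]
    exact HeatAux.continuous_param (C := C6 ^ 2)
      ((cFcl.comp (continuous_snd.prodMk continuous_fst)).pow 2)
      (fun p x => by
        rw [abs_pow]
        exact pow_le_pow_left₀ (abs_nonneg _) (bFcl _ _) 2)
  have cGF : Continuous GF := by
    simp only [hGFdef]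
    exact HeatAux.continuous_param (C := C5 ^ 2)
      ((cFxcl.comp (continuous_snd.prodMk continuous_fst)).pow 2)
      (fun p x => by
        rw [abs_pow]
        exact pow_le_pow_left₀ (abs_nonneg _) (bFxcl _ _) 2)
  have cBc : Continuous Bc := by
    simp only [hBcdef]
    exact (cKk.comp (continuous_id.prodMk continuous_id)).add cJj
  -- slice helpers
  have sliceC : ∀ {f : ℝ → ℝ → ℝ},
      ContinuousOn (fun q : ℝ × ℝ => f q.1 q.2) (Set.Icc 0 ℓ ×ˢ Set.Icc 0 T) →
      ∀ {t : ℝ}, t ∈ Set.Icc (0:ℝ) T → ContinuousOn (fun x => f x t) (Set.Icc 0 ℓ) := by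
    intro f hf t ht
    exact hf.comp ((continuous_id.prodMk continuous_const).continuousOn) (fun x hx => ⟨hx, ht⟩)
  have cSlice : ∀ {f : ℝ → ℝ → ℝ}, (Continuous fun q : ℝ × ℝ => f q.1 q.2) →
      ∀ t : ℝ, Continuous fun x => f x t := fun hf t =>
    hf.comp (continuous_id.prodMk continuous_const)
  have intCongr : ∀ {f g : ℝ → ℝ}, (∀ x ∈ Set.Icc (0:ℝ) ℓ, f x = g x) →
      (∫ x in (0:ℝ)..ℓ, f x) = ∫ x in (0:ℝ)..ℓ, g x := by
    intro f g h
    exact intervalIntegral.integral_congr fun x hx => h x (by rwa [Set.uIcc_of_le hℓ.le] at hx)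
  have iic : ∀ {f : ℝ → ℝ}, ContinuousOn f (Set.Icc 0 ℓ) →
      IntervalIntegrable f volume 0 ℓ := fun {f} hf =>
    ContinuousOn.intervalIntegrable (by rwa [Set.uIcc_of_le hℓ.le])
  -- ψx vanishes at time 0
  have hzero_x : ∀ y ∈ Set.Icc (0:ℝ) ℓ, ψx y 0 = 0 := by
    intro y hy
    have h1 : HasDerivWithinAt (fun x => ψ x 0) 0 (Set.Icc 0 ℓ) y :=
      (hasDerivWithinAt_const y _ (0:ℝ)).congr (fun z hz => hinit z hz) (hinit y hy)
    have h2 := hψx y hy 0 ⟨le_refl 0, hT.le⟩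
    have hu : UniqueDiffWithinAt ℝ (Set.Icc (0:ℝ) ℓ) y := (uniqueDiffOn_Icc hℓ) y hy
    rw [← h2.derivWithin hu, h1.derivWithin hu]
  -- integration by parts identity : N = -M on the square
  have hNM : ∀ s ∈ Set.Icc (0:ℝ) T, ∀ u ∈ Set.Icc (0:ℝ) T, Nn s u = - Mm s u := by
    intro s hs u hu
    have hparts := HeatAux.parts hℓ (sliceC hψ hs) (sliceC hψxc hu) (sliceC hψxc hs)
      (sliceC hψxxc hu) (fun x hx => hψx x hx s hs) (fun x hx => hψxx x hx u hu)
    rw [(hbdry u hu).2, (hbdry u hu).1, mul_zero, mul_zero, sub_zero] at hparts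
    have e1 : Mm s u + Nn s u
        = ∫ x in (0:ℝ)..ℓ, (ψx x s * ψx x u + ψ x s * ψxx x u) := by
      simp only [hMdef, hNdef]
      rw [← intervalIntegral.integral_add (f := fun x => Psx x s * Psx x u)
        (g := fun x => Ps x s * Psxx x u)
        (((cSlice cPsx s).mul (cSlice cPsx u)).intervalIntegrable _ _)
        (((cSlice cPs s).mul (cSlice cPsxx u)).intervalIntegrable _ _)]
      apply intCongr
      intro x hx
      simp only [hPsxdef, hPsdef, hPsxxdef]
      rw [hmxe x hx, hmte s hs, hmte u hu]
    have := e1.trans hparts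
    linarith
  have hMsym : ∀ s u : ℝ, Mm s u = Mm u s := by
    intro s u
    simp only [hMdef]
    exact intervalIntegral.integral_congr fun x _ => mul_comm _ _
  have hNsym : ∀ s ∈ Set.Icc (0:ℝ) T, ∀ u ∈ Set.Icc (0:ℝ) T, Nn s u = Nn u s := by
    intro s hs u hu
    rw [hNM s hs u hu, hNM u hu s hs, hMsym]
  -- time derivative of clamped ψ
  have hPsderiv : ∀ (x : ℝ), ∀ s ∈ Set.Ioo (0:ℝ) T, HasDerivAt (fun s' => Ps x s') (Pst x s) s := by
    intro x s hs
    have h1 : HasDerivAt (fun s' => ψ (mx x) s') (ψt (mx x) s) s :=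
      (hψt (mx x) (hmxm x) s ⟨hs.1.le, hs.2.le⟩).hasDerivAt (Icc_mem_nhds hs.1 hs.2)
    have h2 : (fun s' => Ps x s') =ᶠ[𝓝 s] fun s' => ψ (mx x) s' := by
      filter_upwards [Ioo_mem_nhds hs.1 hs.2] with y hy
      simp only [hPsdef]
      rw [hmte y ⟨hy.1.le, hy.2.le⟩]
    have h3 := h1.congr_of_eventuallyEq h2
    have h4 : Pst x s = ψt (mx x) s := by
      simp only [hPstdef]
      rw [hmte s ⟨hs.1.le, hs.2.le⟩]
    rw [h4]
    exact h3
  -- derivative of N in the first variable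
  have hNderiv : ∀ (u : ℝ), ∀ s ∈ Set.Ioo (0:ℝ) T, HasDerivAt (fun s' => Nn s' u) (Kk s u) s := by
    intro u s hs
    have hε : 0 < min s (T - s) := lt_min hs.1 (by linarith [hs.2])
    have hball : Metric.ball s (min s (T - s)) ⊆ Set.Ioo (0:ℝ) T := by
      intro y hy
      rw [Metric.mem_ball, Real.dist_eq, abs_lt] at hy
      have h1 := min_le_left s (T - s)
      have h2 := min_le_right s (T - s)
      constructor <;> [linarith [hy.1]; linarith [hy.2]]
    have hres := intervalIntegral.hasDerivAt_integral_of_dominated_loc_of_deriv_le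
      (F := fun s' x => Ps x s' * Psxx x u) (F' := fun s' x => Pst x s' * Psxx x u)
      (a := 0) (b := ℓ) (bound := fun _ => C1 * C2) (μ := volume) (Metric.ball_mem_nhds s hε)
      (Filter.Eventually.of_forall fun s' =>
        (((cSlice cPs s').mul (cSlice cPsxx u)) :
          Continuous fun x => Ps x s' * Psxx x u).aestronglyMeasurable)
      ((((cSlice cPs s).mul (cSlice cPsxx u))).intervalIntegrable _ _)
      ((((cSlice cPst s).mul (cSlice cPsxx u)) :
          Continuous fun x => Pst x s * Psxx x u).aestronglyMeasurable)
      (Filter.Eventually.of_forall fun x _ s' _ => by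
        rw [Real.norm_eq_abs, abs_mul]
        exact mul_le_mul (bPst _ _) (bPsxx _ _) (abs_nonneg _) C1nn)
      intervalIntegrable_const
      (Filter.Eventually.of_forall fun x _ s' hs' =>
        (hPsderiv x s' (hball hs')).mul_const (Psxx x u))
    simp only [hNdef, hKdef]
    exact hres.2
  -- derivative of gg on the diagonal
  have hggderiv : ∀ t ∈ Set.Ioo (0:ℝ) T, HasDerivAt gg (-(2 * Kk t t)) t := by
    intro t ht
    have hd := (HeatAux.diag_deriv cKk hNderiv hNsym ht).neg
    apply hd.congr_of_eventuallyEq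
    filter_upwards [Ioo_mem_nhds ht.1 ht.2] with s hs
    simp only [hggdef]
    rw [Pi.neg_apply, hNM s ⟨hs.1.le, hs.2.le⟩ s ⟨hs.1.le, hs.2.le⟩, neg_neg]
  have hgg0 : gg 0 = 0 := by
    simp only [hggdef, hMdef]
    rw [intCongr (g := fun _ => (0:ℝ)) (fun x hx => by
      simp only [hPsxdef]
      rw [hmte 0 ⟨le_refl _, hT.le⟩, hzero_x (mx x) (hmxm x), mul_zero])]
    simp
  have hggFTC : ∀ u ∈ Set.Icc (0:ℝ) T, gg u = ∫ t in (0:ℝ)..u, -(2 * Kk t t) := by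
    intro u hu
    have hder : ∀ t ∈ Set.Ioo (0:ℝ) u, HasDerivWithinAt gg (-(2 * Kk t t)) (Set.Ioi t) t :=
      fun t htt => (hggderiv t ⟨htt.1, lt_of_lt_of_le htt.2 hu.2⟩).hasDerivWithinAt
    have hint : IntervalIntegrable (fun t => -(2 * Kk t t)) volume 0 u :=
      ((continuous_const.mul (cKk.comp (continuous_id.prodMk continuous_id))).neg).intervalIntegrable _ _
    have := intervalIntegral.integral_eq_sub_of_hasDeriv_right_of_le hu.1
      cgg.continuousOn hder hint
    rw [this, hgg0, sub_zero]
  -- Fubini for the PDE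
  have hprod : ∀ᵐ q ∂((volume.restrict (Set.Ioo (0:ℝ) ℓ)).prod (volume.restrict (Set.Ioo (0:ℝ) T))),
      (ψt q.1 q.2 = a q * ψxx q.1 q.2 + F q.1 q.2 ∧ (0 ≤ a q ∧ a q ≤ a0)) := by
    rw [Measure.prod_restrict, ← Measure.volume_eq_prod]
    exact hpde.and hab
  have hswap := Measure.measurePreserving_swap.quasiMeasurePreserving.ae hprod
  have hfub := Measure.ae_ae_of_ae_prod hswap
  -- the per-time-slice workhorse
  have hper : ∀ t ∈ Set.Icc (0:ℝ) T,
      (∀ᵐ x ∂(volume.restrict (Set.Ioo (0:ℝ) ℓ)),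
        (ψt x t = a (x, t) * ψxx x t + F x t ∧ (0 ≤ a (x, t) ∧ a (x, t) ≤ a0))) →
      ((∫ x in (0:ℝ)..ℓ, (ψt x t ^ 2 + a (x, t) * ψxx x t ^ 2)) = Pp t + Bc t
        ∧ 0 ≤ Bc t ∧ Pp t ≤ 2 * a0 * Bc t + 2 * PF t) := by
    intro t htI hx
    have hat : Measurable fun x : ℝ => a (x, t) := ha.comp (measurable_id.prodMk measurable_const)
    have ct1 : ContinuousOn (fun x => ψt x t) (Set.Icc 0 ℓ) := sliceC hψtc htI
    have ct2 : ContinuousOn (fun x => ψxx x t) (Set.Icc 0 ℓ) := sliceC hψxxc htI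
    have ct3 : ContinuousOn (fun x => F x t) (Set.Icc 0 ℓ) := sliceC hF htI
    have ct4 : ContinuousOn (fun x => Fx x t) (Set.Icc 0 ℓ) := sliceC hFxc htI
    have ct5 : ContinuousOn (fun x => ψx x t) (Set.Icc 0 ℓ) := sliceC hψxc htI
    have hIooIcc : Set.Ioo (0:ℝ) ℓ ⊆ Set.Icc (0:ℝ) ℓ := Set.Ioo_subset_Icc_self
    have bxx : ∀ x ∈ Set.Ioo (0:ℝ) ℓ, |ψxx x t| ≤ C2 := fun x hx2 => by
      simpa [Real.norm_eq_abs] using hC2 (x, t) ⟨hIooIcc hx2, htI⟩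
    have ia : IntegrableOn (fun x => a (x, t) * ψxx x t ^ 2) (Set.Ioo 0 ℓ) := by
      apply Integrable.mono' (g := fun _ => a0 * C2 ^ 2)
        (integrableOn_const measure_Ioo_lt_top.ne)
      · exact (hat.aemeasurable.mul
          (((ct2.mono hIooIcc).aemeasurable measurableSet_Ioo).pow_const 2)).aestronglyMeasurable
      · filter_upwards [hx, ae_restrict_mem measurableSet_Ioo] with x hx1 hx2
        rw [Real.norm_eq_abs, abs_mul, abs_of_nonneg hx1.2.1, abs_pow]
        exact mul_le_mul hx1.2.2 (pow_le_pow_left₀ (abs_nonneg _) (bxx x hx2) 2)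
          (by positivity) ha0.le
    have ipt : IntegrableOn (fun x => ψt x t ^ 2) (Set.Ioo 0 ℓ) :=
      ((ct1.pow 2).integrableOn_Icc).mono_set hIooIcc
    have iF2 : IntegrableOn (fun x => F x t ^ 2) (Set.Ioo 0 ℓ) :=
      ((ct3.pow 2).integrableOn_Icc).mono_set hIooIcc
    have iFxx : IntegrableOn (fun x => F x t * ψxx x t) (Set.Ioo 0 ℓ) :=
      ((ct3.mul ct2).integrableOn_Icc).mono_set hIooIcc
    have conv : ∀ (f : ℝ → ℝ), (∫ x in (0:ℝ)..ℓ, f x) = ∫ x in Set.Ioo (0:ℝ) ℓ, f x := by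
      intro f
      rw [intervalIntegral.integral_of_le hℓ.le, integral_Ioc_eq_integral_Ioo]
    have clampT : mt t = t := hmte t htI
    have ePp : Pp t = ∫ x in Set.Ioo (0:ℝ) ℓ, ψt x t ^ 2 := by
      simp only [hPpdef]
      rw [intCongr (g := fun x => ψt x t ^ 2) (fun x hxx => by
        simp only [hPstdef]; rw [hmxe x hxx, clampT]), conv]
    have ePF : PF t = ∫ x in Set.Ioo (0:ℝ) ℓ, F x t ^ 2 := by
      simp only [hPFdef]
      rw [intCongr (g := fun x => F x t ^ 2) (fun x hxx => by
        simp only [hFcldef]; rw [hmxe x hxx, clampT]), conv]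
    have eKtt : Kk t t = ∫ x in Set.Ioo (0:ℝ) ℓ, ψt x t * ψxx x t := by
      simp only [hKdef]
      rw [intCongr (g := fun x => ψt x t * ψxx x t) (fun x hxx => by
        simp only [hPstdef, hPsxxdef]; rw [hmxe x hxx, clampT]), conv]
    have eJ : Jj t = ∫ x in (0:ℝ)..ℓ, Fx x t * ψx x t := by
      simp only [hJdef]
      exact intCongr (fun x hxx => by
        simp only [hFxcldef, hPsxdef]; rw [hmxe x hxx, clampT])
    have hparts2 : (∫ x in (0:ℝ)..ℓ, (Fx x t * ψx x t + F x t * ψxx x t)) = 0 := by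
      have h := HeatAux.parts hℓ ct3 ct5 ct4 (sliceC hψxxc htI)
        (fun x hxx => hFx x hxx t htI) (fun x hxx => hψxx x hxx t htI)
      rw [(hbdry t htI).2, (hbdry t htI).1, mul_zero, mul_zero, sub_zero] at h
      exact h
    have hsplit2 : (∫ x in (0:ℝ)..ℓ, Fx x t * ψx x t)
        + (∫ x in (0:ℝ)..ℓ, F x t * ψxx x t) = 0 := by
      rw [← intervalIntegral.integral_add (f := fun x => Fx x t * ψx x t)
        (g := fun x => F x t * ψxx x t) (iic (ct4.mul ct5)) (iic (ct3.mul ct2))]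
      exact hparts2
    have hx1 : ∀ᵐ x ∂(volume.restrict (Set.Ioo (0:ℝ) ℓ)),
        ψt x t * ψxx x t = a (x, t) * ψxx x t ^ 2 + F x t * ψxx x t := by
      filter_upwards [hx] with x h
      rw [h.1]; ring
    have eK2 : Kk t t = (∫ x in Set.Ioo (0:ℝ) ℓ, a (x, t) * ψxx x t ^ 2)
        + ∫ x in (0:ℝ)..ℓ, F x t * ψxx x t := by
      rw [eKtt, integral_congr_ae hx1, integral_add ia iFxx, conv]
    have eB : Bc t = ∫ x in Set.Ioo (0:ℝ) ℓ, a (x, t) * ψxx x t ^ 2 := by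
      have h1 : (∫ x in (0:ℝ)..ℓ, F x t * ψxx x t) = - Jj t := by
        rw [eJ]; linarith [hsplit2]
      simp only [hBcdef]
      rw [eK2, h1]; ring
    refine ⟨?_, ?_, ?_⟩
    · rw [conv, integral_add ipt ia, ← ePp, ← eB]
    · rw [eB]
      apply MeasureTheory.integral_nonneg_of_ae
      filter_upwards [hx] with x h
      exact mul_nonneg h.2.1 (sq_nonneg _)
    · have hx2 : ∀ᵐ x ∂(volume.restrict (Set.Ioo (0:ℝ) ℓ)),
          ψt x t ^ 2 ≤ 2 * a0 * (a (x, t) * ψxx x t ^ 2) + 2 * F x t ^ 2 := by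
        filter_upwards [hx] with x h
        rw [h.1]
        nlinarith [sq_nonneg (a (x, t) * ψxx x t - F x t),
          mul_nonneg (mul_nonneg (sub_nonneg.2 h.2.2) h.2.1) (sq_nonneg (ψxx x t)),
          sq_nonneg (ψxx x t)]
      have hmono := integral_mono_ae ipt ((ia.const_mul (2 * a0)).add (iF2.const_mul 2)) hx2
      have hsum : (∫ x in Set.Ioo (0:ℝ) ℓ, (2 * a0 * (a (x, t) * ψxx x t ^ 2) + 2 * F x t ^ 2))
          = 2 * a0 * (∫ x in Set.Ioo (0:ℝ) ℓ, a (x, t) * ψxx x t ^ 2)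
            + 2 * ∫ x in Set.Ioo (0:ℝ) ℓ, F x t ^ 2 := by
        rw [integral_add (ia.const_mul (2 * a0)) (iF2.const_mul 2),
          MeasureTheory.integral_const_mul, MeasureTheory.integral_const_mul]
      rw [ePp, eB, ePF]
      exact le_trans hmono (le_of_eq hsum)
  have hmain : ∀ᵐ t : ℝ ∂volume, t ∈ Set.Ioc (0:ℝ) T →
      ((∫ x in (0:ℝ)..ℓ, (ψt x t ^ 2 + a (x, t) * ψxx x t ^ 2)) = Pp t + Bc t
        ∧ 0 ≤ Bc t ∧ Pp t ≤ 2 * a0 * Bc t + 2 * PF t) := by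
    apply HeatAux.ae_Ioc_of_ae_restrict_Ioo
    filter_upwards [hfub, ae_restrict_mem measurableSet_Ioo] with t h1 h2
    exact hper t ⟨h2.1.le, h2.2.le⟩ h1
  -- global-in-time identities
  have hLHS1 : (∫ t in (0:ℝ)..T, ∫ x in (0:ℝ)..ℓ, (ψt x t ^ 2 + a (x, t) * ψxx x t ^ 2))
      = (∫ t in (0:ℝ)..T, Pp t) + ∫ t in (0:ℝ)..T, Bc t := by
    rw [← intervalIntegral.integral_add (cPp.intervalIntegrable _ _) (cBc.intervalIntegrable _ _)]
    apply intervalIntegral.integral_congr_ae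
    filter_upwards [hmain] with t h1 ht
    rw [Set.uIoc_of_le hT.le] at ht
    exact (h1 ht).1
  have hCst : (∫ t in (0:ℝ)..T, ∫ x in (0:ℝ)..ℓ, F x t ^ 2) = ∫ t in (0:ℝ)..T, PF t := by
    apply intervalIntegral.integral_congr
    intro t ht
    rw [Set.uIcc_of_le hT.le] at ht
    simp only [hPFdef]
    exact (intCongr fun x hx => by simp only [hFcldef]; rw [hmxe x hx, hmte t ht]).symm
  have hGst : (∫ t in (0:ℝ)..T, ∫ x in (0:ℝ)..ℓ, Fx x t ^ 2) = ∫ t in (0:ℝ)..T, GF t := by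
    apply intervalIntegral.integral_congr
    intro t ht
    rw [Set.uIcc_of_le hT.le] at ht
    simp only [hGFdef]
    exact (intCongr fun x hx => by simp only [hFxcldef]; rw [hmxe x hx, hmte t ht]).symm
  have hPtot : (∫ t in (0:ℝ)..T, Pp t)
      ≤ 2 * a0 * (∫ t in (0:ℝ)..T, Bc t) + 2 * ∫ t in (0:ℝ)..T, PF t := by
    have h1 := intervalIntegral.integral_mono_ae_restrict hT.le (g := fun t => 2 * a0 * Bc t + 2 * PF t)
      (cPp.intervalIntegrable (μ := volume) 0 T)
      (((continuous_const.mul cBc).add (continuous_const.mul cPF)).intervalIntegrable 0 T)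
      (HeatAux.ae_restrict_Icc_of_ae_Ioc le_rfl
        (by filter_upwards [hmain] with t h ht; exact (h ht).2.2))
    rw [intervalIntegral.integral_add (f := fun t => 2 * a0 * Bc t) (g := fun t => 2 * PF t)
      ((continuous_const.mul cBc).intervalIntegrable _ _)
      ((continuous_const.mul cPF).intervalIntegrable _ _),
      intervalIntegral.integral_const_mul, intervalIntegral.integral_const_mul] at h1
    exact h1
  have hGFnn : ∀ t : ℝ, 0 ≤ GF t := fun t => by
    simp only [hGFdef]
    exact intervalIntegral.integral_nonneg hℓ.le fun x _ => sq_nonneg _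
  have hGtotnn : 0 ≤ ∫ t in (0:ℝ)..T, GF t :=
    intervalIntegral.integral_nonneg hT.le fun t _ => hGFnn t
  have hGpart : ∀ u ∈ Set.Icc (0:ℝ) T, (∫ t in (0:ℝ)..u, GF t) ≤ ∫ t in (0:ℝ)..T, GF t := by
    intro u hu
    have hadd := intervalIntegral.integral_add_adjacent_intervals (a := (0:ℝ)) (b := u) (c := T)
      (cGF.intervalIntegrable (μ := volume) _ _) (cGF.intervalIntegrable (μ := volume) _ _)
    have h2 : 0 ≤ ∫ t in u..T, GF t :=
      intervalIntegral.integral_nonneg hu.2 fun t _ => hGFnn t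
    linarith
  have hggnn : ∀ t : ℝ, 0 ≤ gg t := fun t => by
    simp only [hggdef, hMdef]
    exact intervalIntegral.integral_nonneg hℓ.le fun x _ => mul_self_nonneg _
  have hJle : ∀ t : ℝ, 2 * Jj t ≤ GF t + gg t := by
    intro t
    have h1 : (∫ x in (0:ℝ)..ℓ, (2:ℝ) * (Fxcl x t * Psx x t))
        ≤ ∫ x in (0:ℝ)..ℓ, ((Fxcl x t) ^ 2 + Psx x t * Psx x t) :=
      intervalIntegral.integral_mono_on hℓ.le
        ((continuous_const.mul ((cSlice cFxcl t).mul (cSlice cPsx t))).intervalIntegrable _ _)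
        ((((cSlice cFxcl t).pow 2).add ((cSlice cPsx t).mul (cSlice cPsx t))).intervalIntegrable _ _)
        (fun x _ => by nlinarith [sq_nonneg (Fxcl x t - Psx x t)])
    have h2 : 2 * Jj t = ∫ x in (0:ℝ)..ℓ, (2:ℝ) * (Fxcl x t * Psx x t) := by
      simp only [hJdef]
      rw [intervalIntegral.integral_const_mul]
    have h3 : (∫ x in (0:ℝ)..ℓ, ((Fxcl x t) ^ 2 + Psx x t * Psx x t)) = GF t + gg t := by
      simp only [hGFdef, hggdef, hMdef]
      rw [intervalIntegral.integral_add (f := fun x => Fxcl x t ^ 2) (g := fun x => Psx x t * Psx x t)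
        (((cSlice cFxcl t).pow 2).intervalIntegrable _ _)
        (((cSlice cPsx t).mul (cSlice cPsx t)).intervalIntegrable _ _)]
    rw [h2, ← h3]
    exact h1
  -- the key Gronwall-type inequality
  have hkey : ∀ u ∈ Set.Icc (0:ℝ) T, gg u + 2 * (∫ t in (0:ℝ)..u, Bc t)
      ≤ (∫ t in (0:ℝ)..T, GF t) + ∫ s in (0:ℝ)..u, gg s := by
    intro u hu
    have h1 : gg u = 2 * (∫ t in (0:ℝ)..u, Jj t) - 2 * (∫ t in (0:ℝ)..u, Bc t) := by
      rw [hggFTC u hu]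
      rw [intervalIntegral.integral_congr
        (g := fun t => 2 * Jj t - 2 * Bc t)
        (fun t _ => by simp only [hBcdef]; ring)]
      rw [intervalIntegral.integral_sub (f := fun t => 2 * Jj t) (g := fun t => 2 * Bc t)
        ((continuous_const.mul cJj).intervalIntegrable _ _)
        ((continuous_const.mul cBc).intervalIntegrable _ _),
        intervalIntegral.integral_const_mul, intervalIntegral.integral_const_mul]
    have h2 : (∫ t in (0:ℝ)..u, 2 * Jj t) ≤ ∫ t in (0:ℝ)..u, (GF t + gg t) :=
      intervalIntegral.integral_mono_on hu.1
        ((continuous_const.mul cJj).intervalIntegrable _ _)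
        ((cGF.add cgg).intervalIntegrable _ _) fun t _ => hJle t
    rw [intervalIntegral.integral_const_mul,
      intervalIntegral.integral_add (cGF.intervalIntegrable _ _)
        (cgg.intervalIntegrable _ _)] at h2
    have h3 := hGpart u hu
    linarith
  have hBnnpart : ∀ u ∈ Set.Icc (0:ℝ) T, 0 ≤ ∫ t in (0:ℝ)..u, Bc t := by
    intro u hu
    apply intervalIntegral.integral_nonneg_of_ae_restrict hu.1
    exact HeatAux.ae_restrict_Icc_of_ae_Ioc hu.2
      (by filter_upwards [hmain] with t h ht; exact (h ht).2.1)
  have hgkey : ∀ u ∈ Set.Icc (0:ℝ) T, gg u ≤ (∫ t in (0:ℝ)..T, GF t) + ∫ s in (0:ℝ)..u, gg s :=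
    fun u hu => by linarith [hkey u hu, hBnnpart u hu]
  have hhnn : ∀ u ∈ Set.Icc (0:ℝ) T, 0 ≤ ∫ s in (0:ℝ)..u, gg s :=
    fun u hu => intervalIntegral.integral_nonneg hu.1 fun s _ => hggnn s
  have hhderiv : ∀ u : ℝ, HasDerivAt (fun w => ∫ s in (0:ℝ)..w, gg s) (gg u) u := fun u =>
    intervalIntegral.integral_hasDerivAt_right (cgg.intervalIntegrable _ _)
      (cgg.stronglyMeasurableAtFilter _ _) cgg.continuousAt
  have hgron := norm_le_gronwallBound_of_norm_deriv_right_le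
    (f := fun w => ∫ s in (0:ℝ)..w, gg s) (f' := gg) (δ := 0) (K := 1)
    (ε := ∫ t in (0:ℝ)..T, GF t) (a := 0) (b := T)
    (HasDerivAt.continuousOn (fun u _ => hhderiv u))
    (fun u _ => (hhderiv u).hasDerivWithinAt)
    (by simp)
    (fun u hu => by
      rw [Real.norm_eq_abs, Real.norm_eq_abs, abs_of_nonneg (hggnn u),
        abs_of_nonneg (hhnn u ⟨hu.1, hu.2.le⟩), one_mul]
      linarith [hgkey u ⟨hu.1, hu.2.le⟩])
  have hhbound : ∀ u ∈ Set.Icc (0:ℝ) T,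
      (∫ s in (0:ℝ)..u, gg s) ≤ (∫ t in (0:ℝ)..T, GF t) * (Real.exp u - 1) := by
    intro u hu
    have h := hgron u hu
    rw [Real.norm_eq_abs, abs_of_nonneg (hhnn u hu)] at h
    have e : gronwallBound 0 1 (∫ t in (0:ℝ)..T, GF t) (u - 0)
        = (∫ t in (0:ℝ)..T, GF t) * (Real.exp u - 1) := by
      rw [gronwallBound]
      norm_num
    rw [e] at h
    exact h
  have hggbound : ∀ u ∈ Set.Icc (0:ℝ) T, gg u ≤ (∫ t in (0:ℝ)..T, GF t) * Real.exp T := by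
    intro u hu
    have h1 := hgkey u hu
    have h2 := hhbound u hu
    have h3 : (∫ t in (0:ℝ)..T, GF t) * Real.exp u ≤ (∫ t in (0:ℝ)..T, GF t) * Real.exp T :=
      mul_le_mul_of_nonneg_left (Real.exp_le_exp.2 hu.2) hGtotnn
    nlinarith
  have hBtotle : 2 * (∫ t in (0:ℝ)..T, Bc t) ≤ (∫ t in (0:ℝ)..T, GF t) * Real.exp T := by
    have h1 := hkey T ⟨hT.le, le_refl T⟩
    have h2 := hhbound T ⟨hT.le, le_refl T⟩
    have h3 := hggnn T
    nlinarith
  -- final assembly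
  have hE : (∫ x in (0:ℝ)..ℓ, ψx x t0 ^ 2) = gg t0 := by
    simp only [hggdef, hMdef]
    exact intCongr fun x hx => by
      simp only [hPsxdef]
      rw [hmxe x hx, hmte t0 ht0, pow_two]
  rw [hLHS1, hCst, hGst, hE]
  have hg0 := hggbound t0 ht0
  have hBT := hBnnpart T ⟨hT.le, le_refl T⟩
  have hmul := mul_le_mul_of_nonneg_left hBtotle (by linarith : (0:ℝ) ≤ 2 * a0 + 1)
  have hGE : 0 ≤ (∫ t in (0:ℝ)..T, GF t) * Real.exp T :=
    mul_nonneg hGtotnn (Real.exp_pos T).le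
  have hcomm : (2 * a0 + 2) * Real.exp T * (∫ t in (0:ℝ)..T, GF t)
      = (2 * a0 + 2) * ((∫ t in (0:ℝ)..T, GF t) * Real.exp T) := by ring
  rw [hcomm]
  nlinarith [mul_nonneg ha0.le hBT]
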